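/- In any VN-core A, the fusion map f = (1 ⊗ μ)(δ ⊗ 1) and the map g = (1 ⊗ μ)(1 ⊗ S ⊗ 1)(δ ⊗ 1) satisfy f ∘ g ∘ f = f. -/

import Mathlib

open TensorProduct LinearMap

/-- The fusion map `f = (1 ⊗ μ)(δ ⊗ 1) : A ⊗ A → A ⊗ A`. -/
noncomputable def fusionMap {k A : Type*} [CommRing k] [AddCommGroup A] [Module k A]
    (μ : A ⊗[k] A →ₗ[k] A) (δ : A →ₗ[k] A ⊗[k] A) : A ⊗[k] A →ₗ[k] A ⊗[k] A :=
  lTensor A μ ∘ₗ (TensorProduct.assoc k A A A).toLinearMap ∘ₗ δ.rTensor A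

/-- The map `g = (1 ⊗ μ)(1 ⊗ S ⊗ 1)(δ ⊗ 1) : A ⊗ A → A ⊗ A`. -/
noncomputable def fusionInvMap {k A : Type*} [CommRing k] [AddCommGroup A] [Module k A]
    (μ : A ⊗[k] A →ₗ[k] A) (δ : A →ₗ[k] A ⊗[k] A) (S : A →ₗ[k] A) :
    A ⊗[k] A →ₗ[k] A ⊗[k] A :=
  lTensor A μ ∘ₗ lTensor A (S.rTensor A) ∘ₗ
    (TensorProduct.assoc k A A A).toLinearMap ∘ₗ δ.rTensor A

section Aux

variable {k A : Type*} [CommRing k] [AddCommGroup A] [Module k A]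

private lemma VN_assoc_pt (μ : A ⊗[k] A →ₗ[k] A)
    (hμ : μ ∘ₗ μ.rTensor A =
      μ ∘ₗ μ.lTensor A ∘ₗ (TensorProduct.assoc k A A A).toLinearMap)
    (a b c : A) : μ (μ (a ⊗ₜ b) ⊗ₜ c) = μ (a ⊗ₜ μ (b ⊗ₜ c)) := by
  simpa using LinearMap.congr_fun hμ ((a ⊗ₜ[k] b) ⊗ₜ[k] c)

private lemma VN_Pf (μ : A ⊗[k] A →ₗ[k] A) (δ : A →ₗ[k] A ⊗[k] A)
    (hμ : μ ∘ₗ μ.rTensor A =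
      μ ∘ₗ μ.lTensor A ∘ₗ (TensorProduct.assoc k A A A).toLinearMap) :
    fusionMap μ δ ∘ₗ lTensor A μ ∘ₗ (TensorProduct.assoc k A A A).toLinearMap
      = lTensor A μ ∘ₗ (TensorProduct.assoc k A A A).toLinearMap ∘ₗ
        rTensor A (fusionMap μ δ) := by
  apply TensorProduct.ext_threefold
  intro x y z
  simp only [fusionMap, coe_comp, Function.comp_apply, LinearEquiv.coe_coe,
    assoc_tmul, lTensor_tmul, rTensor_tmul]
  induction δ x using TensorProduct.induction_on with
  | zero => simp
  | tmul a b => simp [VN_assoc_pt μ hμ]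
  | add u v hu hv => simp_all [tmul_add, add_tmul]

private lemma VN_Pg (μ : A ⊗[k] A →ₗ[k] A) (δ : A →ₗ[k] A ⊗[k] A) (S : A →ₗ[k] A)
    (hμ : μ ∘ₗ μ.rTensor A =
      μ ∘ₗ μ.lTensor A ∘ₗ (TensorProduct.assoc k A A A).toLinearMap) :
    fusionInvMap μ δ S ∘ₗ lTensor A μ ∘ₗ (TensorProduct.assoc k A A A).toLinearMap
      = lTensor A μ ∘ₗ (TensorProduct.assoc k A A A).toLinearMap ∘ₗ
        rTensor A (fusionInvMap μ δ S) := by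
  apply TensorProduct.ext_threefold
  intro x y z
  simp only [fusionInvMap, coe_comp, Function.comp_apply, LinearEquiv.coe_coe,
    assoc_tmul, lTensor_tmul, rTensor_tmul]
  induction δ x using TensorProduct.induction_on with
  | zero => simp
  | tmul a b => simp [VN_assoc_pt μ hμ]
  | add u v hu hv => simp_all [tmul_add, add_tmul]

-- naturality 1 : rTensor A δ ∘ lTensor A h = lTensor (A⊗A) h ∘ rTensor A δ
private lemma VN_nat1 (δ : A →ₗ[k] A ⊗[k] A) (h : A →ₗ[k] A) :
    rTensor A δ ∘ₗ lTensor A h = lTensor (A ⊗[k] A) h ∘ₗ rTensor A δ := by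
  apply TensorProduct.ext'
  intro x y
  simp

-- naturality 2 : assoc ∘ lTensor (A⊗A) h = lTensor A (lTensor A h) ∘ assoc
private lemma VN_nat2 (h : A →ₗ[k] A) :
    (TensorProduct.assoc k A A A).toLinearMap ∘ₗ lTensor (A ⊗[k] A) h
      = lTensor A (lTensor A h) ∘ₗ (TensorProduct.assoc k A A A).toLinearMap := by
  apply TensorProduct.ext_threefold
  intro x y z
  simp

-- f ∘ (1 ⊗ h) ∘ δ = (1 ⊗ (μ ∘ (1 ⊗ h) ∘ δ)) ∘ δ
private lemma VN_fh (μ : A ⊗[k] A →ₗ[k] A) (δ : A →ₗ[k] A ⊗[k] A) (h : A →ₗ[k] A)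
    (hδ : (TensorProduct.assoc k A A A).toLinearMap ∘ₗ δ.rTensor A ∘ₗ δ =
      δ.lTensor A ∘ₗ δ) :
    fusionMap μ δ ∘ₗ lTensor A h ∘ₗ δ
      = lTensor A (μ ∘ₗ lTensor A h ∘ₗ δ) ∘ₗ δ := by
  calc fusionMap μ δ ∘ₗ lTensor A h ∘ₗ δ
      = lTensor A μ ∘ₗ (TensorProduct.assoc k A A A).toLinearMap ∘ₗ
          (rTensor A δ ∘ₗ lTensor A h) ∘ₗ δ := by
        simp only [fusionMap, comp_assoc]
    _ = lTensor A μ ∘ₗ ((TensorProduct.assoc k A A A).toLinearMap ∘ₗ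
          lTensor (A ⊗[k] A) h) ∘ₗ rTensor A δ ∘ₗ δ := by
        rw [VN_nat1]; simp only [comp_assoc]
    _ = lTensor A μ ∘ₗ lTensor A (lTensor A h) ∘ₗ
          ((TensorProduct.assoc k A A A).toLinearMap ∘ₗ rTensor A δ ∘ₗ δ) := by
        rw [VN_nat2]; simp only [comp_assoc]
    _ = lTensor A μ ∘ₗ lTensor A (lTensor A h) ∘ₗ lTensor A δ ∘ₗ δ := by rw [hδ]
    _ = lTensor A (μ ∘ₗ lTensor A h ∘ₗ δ) ∘ₗ δ := by
        simp only [lTensor_comp, comp_assoc]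

end Aux

/-- in any VN-core, `f ∘ g ∘ f = f`. -/
theorem fusion_fgf {k A : Type*} [CommRing k] [AddCommGroup A] [Module k A]
    (μ : A ⊗[k] A →ₗ[k] A) (δ : A →ₗ[k] A ⊗[k] A) (S : A →ₗ[k] A)
    -- associativity of μ
    (hμ : μ ∘ₗ μ.rTensor A =
      μ ∘ₗ μ.lTensor A ∘ₗ (TensorProduct.assoc k A A A).toLinearMap)
    -- coassociativity of δ
    (hδ : (TensorProduct.assoc k A A A).toLinearMap ∘ₗ δ.rTensor A ∘ₗ δ =
      δ.lTensor A ∘ₗ δ)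
    -- semibialgebra axiom: δμ = (μ ⊗ μ)(1 ⊗ c ⊗ 1)(δ ⊗ δ)
    (hsb : δ ∘ₗ μ = TensorProduct.map μ μ ∘ₗ
      (TensorProduct.tensorTensorTensorComm k A A A A).toLinearMap ∘ₗ
      TensorProduct.map δ δ)
    -- VN-core axiom: μ₃(1 ⊗ S ⊗ 1)δ₃ = 1
    (hS : μ ∘ₗ lTensor A μ ∘ₗ lTensor A (S.rTensor A) ∘ₗ lTensor A δ ∘ₗ δ =
      LinearMap.id) :
    fusionMap μ δ ∘ₗ fusionInvMap μ δ S ∘ₗ fusionMap μ δ = fusionMap μ δ := by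
  set α := (TensorProduct.assoc k A A A).toLinearMap with hα
  set f := fusionMap μ δ with hf
  set g := fusionInvMap μ δ S with hg
  -- Step 1: g ∘ δ = (1 ⊗ h) ∘ δ with h = μ ∘ (S ⊗ 1) ∘ δ
  have hgδ : g ∘ₗ δ = lTensor A (μ ∘ₗ S.rTensor A ∘ₗ δ) ∘ₗ δ := by
    calc g ∘ₗ δ
        = lTensor A μ ∘ₗ lTensor A (S.rTensor A) ∘ₗ (α ∘ₗ rTensor A δ ∘ₗ δ) := by
          simp only [hg, fusionInvMap, comp_assoc, hα]
      _ = lTensor A μ ∘ₗ lTensor A (S.rTensor A) ∘ₗ lTensor A δ ∘ₗ δ := by rw [hα, hδ]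
      _ = lTensor A (μ ∘ₗ S.rTensor A ∘ₗ δ) ∘ₗ δ := by
          simp only [lTensor_comp, comp_assoc]
  -- Step 2: f ∘ g ∘ δ = δ
  have hfgδ : f ∘ₗ g ∘ₗ δ = δ := by
    rw [hgδ, hf, VN_fh μ δ _ hδ]
    have : μ ∘ₗ lTensor A (μ ∘ₗ S.rTensor A ∘ₗ δ) ∘ₗ δ = LinearMap.id := by
      rw [← hS]; simp only [lTensor_comp, comp_assoc]
    rw [this, lTensor_id, id_comp]
  -- Step 3: (f ∘ g) commutes with right multiplication
  have Pf := VN_Pf μ δ hμ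
  have Pg := VN_Pg μ δ S hμ
  have Pfg : (f ∘ₗ g) ∘ₗ lTensor A μ ∘ₗ α
      = lTensor A μ ∘ₗ α ∘ₗ rTensor A (f ∘ₗ g) := by
    calc (f ∘ₗ g) ∘ₗ lTensor A μ ∘ₗ α
        = f ∘ₗ (g ∘ₗ lTensor A μ ∘ₗ α) := by simp only [comp_assoc]
      _ = (f ∘ₗ lTensor A μ ∘ₗ α) ∘ₗ rTensor A g := by
          rw [Pg]; simp only [comp_assoc]; rfl
      _ = lTensor A μ ∘ₗ α ∘ₗ rTensor A f ∘ₗ rTensor A g := by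
          rw [Pf]; simp only [comp_assoc]; rfl
      _ = lTensor A μ ∘ₗ α ∘ₗ rTensor A (f ∘ₗ g) := by rw [rTensor_comp]
  -- Conclude
  calc f ∘ₗ g ∘ₗ f
      = ((f ∘ₗ g) ∘ₗ lTensor A μ ∘ₗ α) ∘ₗ rTensor A δ := by
        simp only [hf, fusionMap, comp_assoc, hα]
    _ = lTensor A μ ∘ₗ α ∘ₗ rTensor A (f ∘ₗ g) ∘ₗ rTensor A δ := by
        rw [Pfg]; simp only [comp_assoc]
    _ = lTensor A μ ∘ₗ α ∘ₗ rTensor A ((f ∘ₗ g) ∘ₗ δ) := by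
        simp only [comp_assoc, ← rTensor_comp]
    _ = lTensor A μ ∘ₗ α ∘ₗ rTensor A δ := by rw [comp_assoc, hfgδ]
    _ = f := by simp only [hf, fusionMap, hα]
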